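/- Under the absorption condition inf_X (σ - ρ) > c > 0, where ρ(x) = ess-sup_θ ∫_{S²} k(x,θ,θ') dθ', the combined operator K = T⁻¹A₂ is a strict contraction on L^∞(X × S²): there exists 0 < C < 1 with ‖Kw‖_{L^∞} ≤ C‖w‖_{L^∞} for all w ∈ L^∞(X × S²). -/

import Mathlib

open MeasureTheory
open scoped NNReal ENNReal

noncomputable section

abbrev E3 := EuclideanSpace ℝ (Fin 3)

/-- The unit sphere in `ℝ³`. -/
def S2 : Set E3 := Metric.sphere (0 : E3) 1

/-- Optical path length from `y` to `x`. -/
def tau (σ : E3 → ℝ) (x y : E3) : ℝ :=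
  ∫ s in (0:ℝ)..‖x - y‖, σ (x - (s / ‖x - y‖) • (x - y))

/-- The scattering operator with kernel `k`. -/
def A2 (k : E3 → E3 → E3 → ℝ) (w : E3 → E3 → ℝ) (x θ : E3) : ℝ :=
  ∫ θ' in S2, k x θ θ' * w x θ' ∂(μH[2])

/-- The operator solving the non-scattering transport equation with source `S`. -/
def Tinv (σ : E3 → ℝ) (γm : E3 → E3 → E3) (S : E3 → E3 → ℝ) (x θ : E3) : ℝ :=
  ∫ t in (0:ℝ)..‖x - γm x θ‖, Real.exp (-(tau σ x (x - t • θ))) * S (x - t • θ) θ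

/-- The combined single-scattering operator `K = T⁻¹ A₂`. -/
def Kop (σ : E3 → ℝ) (γm : E3 → E3 → E3) (k : E3 → E3 → E3 → ℝ)
    (w : E3 → E3 → ℝ) : E3 → E3 → ℝ :=
  Tinv σ γm (A2 k w)

/-! ### Auxiliary lemmas -/

lemma abs_sin_sub (a b : ℝ) : |Real.sin a - Real.sin b| ≤ |a - b| := by
  rw [Real.sin_sub_sin]
  have h1 : |Real.sin ((a - b) / 2)| ≤ |(a - b) / 2| := Real.abs_sin_le_abs
  have h2 : |Real.cos ((a + b) / 2)| ≤ 1 := Real.abs_cos_le_one _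
  have h3 : |(a - b) / 2| = |a - b| / 2 := by rw [abs_div]; norm_num
  rw [abs_mul, abs_mul]
  rw [h3] at h1
  have h4 : (0:ℝ) ≤ |Real.sin ((a - b) / 2)| := abs_nonneg _
  have h5 : (0:ℝ) ≤ |a - b| := abs_nonneg _
  calc |(2:ℝ)| * |Real.sin ((a - b) / 2)| * |Real.cos ((a + b) / 2)|
      ≤ |(2:ℝ)| * (|a - b| / 2) * 1 := by
        apply mul_le_mul (by apply mul_le_mul_of_nonneg_left h1; positivity) h2 (abs_nonneg _)
        positivity
    _ = |a - b| := by rw [abs_of_nonneg (by norm_num : (0:ℝ) ≤ 2)]; ring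

lemma abs_cos_sub (a b : ℝ) : |Real.cos a - Real.cos b| ≤ |a - b| := by
  rw [Real.cos_sub_cos]
  have h1 : |Real.sin ((a - b) / 2)| ≤ |(a - b) / 2| := Real.abs_sin_le_abs
  have h2 : |Real.sin ((a + b) / 2)| ≤ 1 := Real.abs_sin_le_one _
  have h3 : |(a - b) / 2| = |a - b| / 2 := by rw [abs_div]; norm_num
  rw [h3] at h1
  rw [abs_mul, abs_mul]
  calc |(-2:ℝ)| * |Real.sin ((a + b) / 2)| * |Real.sin ((a - b) / 2)|
      ≤ |(-2:ℝ)| * 1 * (|a - b| / 2) := by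
        apply mul_le_mul (by apply mul_le_mul_of_nonneg_left h2; positivity) h1 (abs_nonneg _)
        positivity
    _ = |a - b| := by rw [abs_of_nonpos (by norm_num : (-2:ℝ) ≤ 0)]; ring

lemma mul_sub_mul_abs (a b c d : ℝ) (hb : |b| ≤ 1) (hc : |c| ≤ 1) :
    |a * b - c * d| ≤ |a - c| + |b - d| := by
  have h : a * b - c * d = (a - c) * b + c * (b - d) := by ring
  rw [h]
  calc |(a - c) * b + c * (b - d)| ≤ |(a - c) * b| + |c * (b - d)| := abs_add_le _ _
    _ = |a - c| * |b| + |c| * |b - d| := by rw [abs_mul, abs_mul]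
    _ ≤ |a - c| * 1 + 1 * |b - d| := by
        exact add_le_add (mul_le_mul_of_nonneg_left hb (abs_nonneg _))
          (mul_le_mul_of_nonneg_right hc (abs_nonneg _))
    _ = |a - c| + |b - d| := by ring

/-- Spherical coordinates map. -/
def Fsph : (Fin 2 → ℝ) → E3 := fun u =>
  (WithLp.equiv 2 (Fin 3 → ℝ)).symm
    ![Real.sin (u 0) * Real.cos (u 1), Real.sin (u 0) * Real.sin (u 1), Real.cos (u 0)]

lemma Fsph_apply (u : Fin 2 → ℝ) (i : Fin 3) :
    Fsph u i = ![Real.sin (u 0) * Real.cos (u 1), Real.sin (u 0) * Real.sin (u 1),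
      Real.cos (u 0)] i := rfl

lemma Fsph_lip : LipschitzWith 4 Fsph := by
  apply LipschitzWith.of_dist_le_mul
  intro u v
  have hd0 : |u 0 - v 0| ≤ dist u v := by
    have := dist_le_pi_dist u v 0; rwa [Real.dist_eq] at this
  have hd1 : |u 1 - v 1| ≤ dist u v := by
    have := dist_le_pi_dist u v 1; rwa [Real.dist_eq] at this
  have hdnn : (0:ℝ) ≤ dist u v := dist_nonneg
  have key : ∀ i : Fin 3, |Fsph u i - Fsph v i| ≤ 2 * dist u v := by
    intro i
    fin_cases i
    · rw [Fsph_apply, Fsph_apply]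
      simp only [Matrix.cons_val_zero]
      calc |Real.sin (u 0) * Real.cos (u 1) - Real.sin (v 0) * Real.cos (v 1)|
          ≤ |Real.sin (u 0) - Real.sin (v 0)| + |Real.cos (u 1) - Real.cos (v 1)| :=
            mul_sub_mul_abs _ _ _ _ (Real.abs_cos_le_one _) (Real.abs_sin_le_one _)
        _ ≤ |u 0 - v 0| + |u 1 - v 1| := add_le_add (abs_sin_sub _ _) (abs_cos_sub _ _)
        _ ≤ 2 * dist u v := by linarith
    · rw [Fsph_apply, Fsph_apply]
      simp only [Matrix.cons_val_one, Matrix.head_cons]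
      calc |Real.sin (u 0) * Real.sin (u 1) - Real.sin (v 0) * Real.sin (v 1)|
          ≤ |Real.sin (u 0) - Real.sin (v 0)| + |Real.sin (u 1) - Real.sin (v 1)| :=
            mul_sub_mul_abs _ _ _ _ (Real.abs_sin_le_one _) (Real.abs_sin_le_one _)
        _ ≤ |u 0 - v 0| + |u 1 - v 1| := add_le_add (abs_sin_sub _ _) (abs_sin_sub _ _)
        _ ≤ 2 * dist u v := by linarith
    · rw [Fsph_apply, Fsph_apply]
      simp only [Matrix.cons_val_two, Matrix.tail_cons, Matrix.head_cons]
      calc |Real.cos (u 0) - Real.cos (v 0)| ≤ |u 0 - v 0| := abs_cos_sub _ _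
        _ ≤ 2 * dist u v := by linarith
  have h0 := key 0
  have h1 := key 1
  have h2 := key 2
  rw [EuclideanSpace.dist_eq, Fin.sum_univ_three]
  simp only [Real.dist_eq]
  have hle : |Fsph u 0 - Fsph v 0| ^ 2 + |Fsph u 1 - Fsph v 1| ^ 2 + |Fsph u 2 - Fsph v 2| ^ 2
      ≤ (4 * dist u v) ^ 2 := by
    nlinarith [abs_nonneg (Fsph u 0 - Fsph v 0), abs_nonneg (Fsph u 1 - Fsph v 1),
      abs_nonneg (Fsph u 2 - Fsph v 2)]
  calc Real.sqrt (|Fsph u 0 - Fsph v 0| ^ 2 + |Fsph u 1 - Fsph v 1| ^ 2 +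
          |Fsph u 2 - Fsph v 2| ^ 2)
      ≤ Real.sqrt ((4 * dist u v) ^ 2) := Real.sqrt_le_sqrt hle
    _ = 4 * dist u v := Real.sqrt_sq (by positivity)
    _ = (4 : ℝ≥0) * dist u v := by norm_num

lemma S2_subset :
    S2 ⊆ Fsph '' (Set.univ.pi fun _ : Fin 2 => Set.Icc (-4:ℝ) 4) := by
  intro v hv
  have hv1 : ‖v‖ = 1 := mem_sphere_zero_iff_norm.mp hv
  have hsum : (v 0) ^ 2 + (v 1) ^ 2 + (v 2) ^ 2 = 1 := by
    have h := hv1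
    rw [EuclideanSpace.norm_eq] at h
    have hnn : (0:ℝ) ≤ ∑ i, ‖v i‖ ^ 2 := by positivity
    have h2 : (∑ i, ‖v i‖ ^ 2) = 1 := by
      nlinarith [Real.sq_sqrt hnn]
    simpa [Fin.sum_univ_three, Real.norm_eq_abs, sq_abs] using h2
  have h2le : |v 2| ≤ 1 := abs_le.mpr ⟨by nlinarith, by nlinarith⟩
  set z : ℂ := ⟨v 0, v 1⟩ with hzdef
  have hre : z.re = v 0 := rfl
  have him : z.im = v 1 := rfl
  have hsin : Real.sin (Real.arccos (v 2)) = ‖z‖ := by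
    rw [Real.sin_arccos, Complex.norm_def, Complex.normSq_apply, hre, him]
    congr 1
    linear_combination -hsum
  have hφmem : Real.arccos (v 2) ∈ Set.Icc (-4:ℝ) 4 :=
    ⟨by linarith [Real.arccos_nonneg (v 2)],
      by linarith [Real.arccos_le_pi (v 2), Real.pi_le_four]⟩
  have hθmem : z.arg ∈ Set.Icc (-4:ℝ) 4 :=
    ⟨by linarith [Complex.neg_pi_lt_arg z, Real.pi_le_four],
      by linarith [Complex.arg_le_pi z, Real.pi_le_four]⟩
  refine ⟨![Real.arccos (v 2), z.arg], ?_, ?_⟩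
  · intro i _
    fin_cases i
    · simpa using hφmem
    · simpa using hθmem
  · have hc0 : Real.sin (Real.arccos (v 2)) * Real.cos z.arg = v 0 := by
      by_cases hz0 : z = 0
      · have hv0 : v 0 = 0 := by rw [← hre, hz0]; simp
        rw [hsin, hz0, norm_zero, zero_mul, hv0]
      · rw [hsin, Complex.cos_arg hz0, hre]
        have habs0 : ‖z‖ ≠ 0 := norm_ne_zero_iff.mpr hz0
        field_simp
    have hc1 : Real.sin (Real.arccos (v 2)) * Real.sin z.arg = v 1 := by
      by_cases hz0 : z = 0
      · have hv1' : v 1 = 0 := by rw [← him, hz0]; simp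
        rw [hsin, hz0, norm_zero, zero_mul, hv1']
      · rw [hsin, Complex.sin_arg, him]
        have habs0 : ‖z‖ ≠ 0 := norm_ne_zero_iff.mpr hz0
        field_simp
    have hc2 : Real.cos (Real.arccos (v 2)) = v 2 :=
      Real.cos_arccos (abs_le.mp h2le).1 (abs_le.mp h2le).2
    apply (WithLp.equiv 2 (Fin 3 → ℝ)).injective
    funext i
    rw [show (WithLp.equiv 2 (Fin 3 → ℝ)) (Fsph ![Real.arccos (v 2), z.arg]) i
        = Fsph ![Real.arccos (v 2), z.arg] i from rfl,
      show (WithLp.equiv 2 (Fin 3 → ℝ)) v i = v i from rfl, Fsph_apply]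
    have hu0 : (![Real.arccos (v 2), z.arg]) 0 = Real.arccos (v 2) := rfl
    have hu1 : (![Real.arccos (v 2), z.arg]) 1 = z.arg := rfl
    fin_cases i
    · simpa [hu0, hu1] using hc0
    · simpa [hu0, hu1] using hc1
    · simpa [hu0, hu1] using hc2

lemma S2_fin : μH[(2:ℝ)] S2 ≠ ⊤ := by
  have hpi : (μH[(2:ℝ)] : Measure (Fin 2 → ℝ)) = volume := by
    have h := MeasureTheory.hausdorffMeasure_pi_real (ι := Fin 2)
    simpa using h
  have h1 : μH[(2:ℝ)] S2 ≤ ((4:ℝ≥0) : ℝ≥0∞) ^ (2:ℝ) *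
      μH[(2:ℝ)] (Set.univ.pi fun _ : Fin 2 => Set.Icc (-4:ℝ) 4) :=
    le_trans (measure_mono S2_subset) (Fsph_lip.hausdorffMeasure_image_le (by norm_num) _)
  refine ne_top_of_le_ne_top ?_ h1
  rw [hpi, volume_pi_pi]
  apply ENNReal.mul_ne_top
  · exact ENNReal.rpow_ne_top_of_nonneg (by norm_num) ENNReal.coe_ne_top
  · simp only [Real.volume_Icc, Finset.prod_const]
    exact ENNReal.pow_ne_top ENNReal.ofReal_ne_top

lemma abs_A2_le (k : E3 → E3 → E3 → ℝ)
    (hk0 : ∀ x θ θ', 0 ≤ k x θ θ')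
    (hkc : Continuous fun p : E3 × E3 × E3 => k p.1 p.2.1 p.2.2)
    (w : E3 → E3 → ℝ) (M : ℝ) (hM : 0 ≤ M) (hw : ∀ x θ, |w x θ| ≤ M)
    (ρ : E3 → ℝ) (hρ : ∀ x θ, (∫ θ' in S2, k x θ θ' ∂(μH[2])) ≤ ρ x)
    (y θ : E3) : |A2 k w y θ| ≤ ρ y * M := by
  have hkyc : Continuous fun θ' => k y θ θ' :=
    hkc.comp (continuous_const.prodMk (continuous_const.prodMk continuous_id))
  have hkm : Measurable fun θ' => k y θ θ' := hkyc.measurable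
  have hsne : (S2 : Set E3).Nonempty := NormedSpace.sphere_nonempty.mpr zero_le_one
  obtain ⟨θ₀, hθ₀, hmax⟩ := (isCompact_sphere (0:E3) 1).exists_isMaxOn hsne hkyc.continuousOn
  have hfin : (∫⁻ θ' in S2, ENNReal.ofReal (k y θ θ') ∂(μH[2])) ≠ ⊤ := by
    have hle : (∫⁻ θ' in S2, ENNReal.ofReal (k y θ θ') ∂(μH[2]))
        ≤ ENNReal.ofReal (k y θ θ₀) * μH[(2:ℝ)] S2 := by
      refine le_trans (setLIntegral_mono measurable_const
        fun θ' hθ' => ENNReal.ofReal_le_ofReal (hmax hθ')) ?_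
      rw [setLIntegral_const]
    exact ne_top_of_le_ne_top (ENNReal.mul_ne_top ENNReal.ofReal_ne_top S2_fin) hle
  have h1 : |A2 k w y θ| ≤
      (∫⁻ θ' in S2, ENNReal.ofReal ‖k y θ θ' * w y θ'‖ ∂(μH[2])).toReal := by
    rw [A2, ← Real.norm_eq_abs]
    exact norm_integral_le_lintegral_norm _
  have h2 : (∫⁻ θ' in S2, ENNReal.ofReal ‖k y θ θ' * w y θ'‖ ∂(μH[2]))
      ≤ (∫⁻ θ' in S2, ENNReal.ofReal (k y θ θ') ∂(μH[2])) * ENNReal.ofReal M := by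
    rw [← lintegral_mul_const _ hkm.ennreal_ofReal]
    refine lintegral_mono fun θ' => ?_
    rw [← ENNReal.ofReal_mul (hk0 y θ θ')]
    apply ENNReal.ofReal_le_ofReal
    rw [Real.norm_eq_abs, abs_mul, abs_of_nonneg (hk0 y θ θ')]
    exact mul_le_mul_of_nonneg_left (hw y θ') (hk0 y θ θ')
  have h3 : ((∫⁻ θ' in S2, ENNReal.ofReal (k y θ θ') ∂(μH[2])) * ENNReal.ofReal M).toReal
      = (∫ θ' in S2, k y θ θ' ∂(μH[2])) * M := by
    rw [ENNReal.toReal_mul, ENNReal.toReal_ofReal hM]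
    congr 1
    rw [integral_eq_lintegral_of_nonneg_ae (ae_of_all _ fun θ' => hk0 y θ θ')
      hkyc.aestronglyMeasurable]
  calc |A2 k w y θ|
      ≤ (∫⁻ θ' in S2, ENNReal.ofReal ‖k y θ θ' * w y θ'‖ ∂(μH[2])).toReal := h1
    _ ≤ ((∫⁻ θ' in S2, ENNReal.ofReal (k y θ θ') ∂(μH[2])) * ENNReal.ofReal M).toReal :=
        ENNReal.toReal_mono (ENNReal.mul_ne_top hfin ENNReal.ofReal_ne_top) h2
    _ = (∫ θ' in S2, k y θ θ' ∂(μH[2])) * M := h3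
    _ ≤ ρ y * M := mul_le_mul_of_nonneg_right (hρ y θ) hM

/-- Under the absorption condition `inf_X (σ - ρ) > c > 0`, the operator
`K = T⁻¹A₂` is a strict contraction on `L^∞(X × S²)`. -/
theorem K_contraction (X : Set E3) (hXb : Bornology.IsBounded X) (hXc : Convex ℝ X)
    (σ : E3 → ℝ) (hσc : Continuous σ) (hσ0 : ∀ z, 0 ≤ σ z)
    (k : E3 → E3 → E3 → ℝ) (hkc : Continuous fun p : E3 × E3 × E3 => k p.1 p.2.1 p.2.2)
    (hk0 : ∀ x θ θ', 0 ≤ k x θ θ')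
    (γm : E3 → E3 → E3)
    (hγbd : ∀ x ∈ closure X, ∀ θ ∈ S2, γm x θ ∈ frontier X)
    (hγray : ∀ x ∈ closure X, ∀ θ ∈ S2, ∃ t : ℝ, 0 ≤ t ∧ γm x θ = x - t • θ)
    (ρ : E3 → ℝ) (hρ : ∀ x θ, (∫ θ' in S2, k x θ θ' ∂(μH[2])) ≤ ρ x)
    (c : ℝ) (hc : 0 < c)
    (habs : ∀ x ∈ closure X, c < σ x - ρ x) :
    ∃ C : ℝ, 0 < C ∧ C < 1 ∧
      ∀ (w : E3 → E3 → ℝ), Measurable (fun p : E3 × E3 => w p.1 p.2) →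
        ∀ M : ℝ, (∀ x θ, |w x θ| ≤ M) →
          ∀ x ∈ X, ∀ θ ∈ S2, |Kop σ γm k w x θ| ≤ C * M := by
  classical
  rcases Set.eq_empty_or_nonempty X with rfl | ⟨x₀, hx₀⟩
  · exact ⟨1/2, by norm_num, by norm_num,
      fun w _ M _ x hx => absurd hx (Set.notMem_empty x)⟩
  have hXcl : IsCompact (closure X) := hXb.isCompact_closure
  obtain ⟨z, hz, hzmax⟩ := hXcl.exists_isMaxOn ⟨x₀, subset_closure hx₀⟩ hσc.continuousOn
  have hρ0 : ∀ y, 0 ≤ ρ y := fun y =>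
    le_trans (integral_nonneg fun θ' => hk0 y 0 θ') (hρ y 0)
  have hcS : c < σ z := by have := habs z hz; have := hρ0 z; linarith
  have hS0 : 0 < σ z := hc.trans hcS
  refine ⟨1 - c / σ z, ?_, ?_, ?_⟩
  · have : c / σ z < 1 := (div_lt_one hS0).mpr hcS
    linarith
  · have : 0 < c / σ z := div_pos hc hS0
    linarith
  have hρσ : ∀ y ∈ closure X, ρ y ≤ σ y * (1 - c / σ z) := by
    intro y hy
    have h1 : ρ y < σ y - c := by linarith [habs y hy]
    have h2 : σ y ≤ σ z := hzmax hy
    have h3 : σ y * (c / σ z) ≤ c := by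
      calc σ y * (c / σ z) ≤ σ z * (c / σ z) :=
            mul_le_mul_of_nonneg_right h2 (le_of_lt (div_pos hc hS0))
        _ = c := by rw [mul_comm, div_mul_cancel₀ c hS0.ne']
    have h4 : σ y * (1 - c / σ z) = σ y - σ y * (c / σ z) := by ring
    linarith
  set C := 1 - c / σ z with hCdef
  have hC0 : 0 < C := by
    have : c / σ z < 1 := (div_lt_one hS0).mpr hcS
    rw [hCdef]; linarith
  intro w hwm M hwM x hx θ hθ
  have hM : 0 ≤ M := (abs_nonneg _).trans (hwM 0 0)
  have hxcl : x ∈ closure X := subset_closure hx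
  obtain ⟨t₀, ht₀, hγ⟩ := hγray x hxcl θ hθ
  have hθ1 : ‖θ‖ = 1 := mem_sphere_zero_iff_norm.mp hθ
  have hL : ‖x - γm x θ‖ = t₀ := by
    rw [hγ, sub_sub_cancel, norm_smul, hθ1, Real.norm_eq_abs, abs_of_nonneg ht₀, mul_one]
  have hseg : ∀ t ∈ Set.Icc (0:ℝ) t₀, x - t • θ ∈ closure X := by
    intro t ht
    have hγcl : x - t₀ • θ ∈ closure X := by
      rw [← hγ]; exact frontier_subset_closure (hγbd x hxcl θ hθ)
    rcases eq_or_lt_of_le ht₀ with heq | hpos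
    · have ht0 : t = 0 := le_antisymm (heq ▸ ht.2) ht.1
      rw [ht0]; simpa using hxcl
    · have ht₀ne : t₀ ≠ 0 := ne_of_gt hpos
      have hmem := hXc.closure hxcl hγcl (a := 1 - t / t₀) (b := t / t₀)
        (by
          have : t / t₀ ≤ 1 := (div_le_one hpos).mpr ht.2
          linarith)
        (div_nonneg ht.1 (le_of_lt hpos)) (by ring)
      have hkey : (1 - t / t₀) • x + (t / t₀) • (x - t₀ • θ) = x - t • θ := by
        rw [smul_sub, smul_smul, div_mul_cancel₀ t ht₀ne]
        module
      rwa [hkey] at hmem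
  set Eint : ℝ → ℝ := fun t => ∫ s in (0:ℝ)..t, σ (x - s • θ) with hEint
  have hφc : Continuous fun t : ℝ => x - t • θ :=
    continuous_const.sub (continuous_id.smul continuous_const)
  have hσφ : Continuous fun s : ℝ => σ (x - s • θ) := hσc.comp hφc
  have hEderiv : ∀ t : ℝ, HasDerivAt Eint (σ (x - t • θ)) t := fun t =>
    intervalIntegral.integral_hasDerivAt_right (hσφ.intervalIntegrable _ _)
      (hσφ.stronglyMeasurableAtFilter _ _) hσφ.continuousAt
  have hEc : Continuous Eint :=
    continuous_iff_continuousAt.mpr fun t => (hEderiv t).continuousAt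
  have htau : ∀ t : ℝ, 0 < t → tau σ x (x - t • θ) = Eint t := by
    intro t ht
    have hxy : x - (x - t • θ) = t • θ := by abel
    have hnorm : ‖t • θ‖ = t := by
      rw [norm_smul, hθ1, Real.norm_eq_abs, abs_of_pos ht, mul_one]
    rw [tau, hxy, hnorm, hEint]
    refine intervalIntegral.integral_congr fun s _ => ?_
    rw [smul_smul, div_mul_cancel₀ s ht.ne']
  have hA2 : ∀ y ∈ closure X, |A2 k w y θ| ≤ σ y * (C * M) := by
    intro y hy
    calc |A2 k w y θ| ≤ ρ y * M := abs_A2_le k hk0 hkc w M hM hwM ρ hρ y θ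
      _ ≤ (σ y * C) * M := mul_le_mul_of_nonneg_right (hρσ y hy) hM
      _ = σ y * (C * M) := by ring
  have hFTC : (∫ t in (0:ℝ)..t₀, Real.exp (-(Eint t)) * σ (x - t • θ))
      = 1 - Real.exp (-(Eint t₀)) := by
    have hG : ∀ t ∈ Set.uIcc (0:ℝ) t₀, HasDerivAt (fun u => -Real.exp (-(Eint u)))
        (Real.exp (-(Eint t)) * σ (x - t • θ)) t := by
      intro t _
      have h1 : HasDerivAt (fun u => -(Eint u)) (-(σ (x - t • θ))) t := (hEderiv t).neg
      have h2 : HasDerivAt (fun u => Real.exp (-(Eint u)))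
          (Real.exp (-(Eint t)) * -(σ (x - t • θ))) t := (Real.hasDerivAt_exp _).comp t h1
      have h3 := h2.neg
      rw [show Real.exp (-(Eint t)) * σ (x - t • θ)
          = -(Real.exp (-(Eint t)) * -(σ (x - t • θ))) by ring]
      exact h3
    rw [intervalIntegral.integral_eq_sub_of_hasDerivAt hG
      (((hEc.neg.rexp).mul hσφ).intervalIntegrable _ _)]
    have hE0 : Eint 0 = 0 := intervalIntegral.integral_same
    rw [hE0]
    simp only [neg_zero, Real.exp_zero]
    ring
  have hInt : IntervalIntegrable
      (fun t => Real.exp (-(Eint t)) * σ (x - t • θ) * (C * M)) volume 0 t₀ :=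
    (((hEc.neg.rexp).mul hσφ).mul continuous_const).intervalIntegrable _ _
  have hbound : ∀ᵐ t ∂(volume.restrict (Set.uIoc (0:ℝ) t₀)),
      ‖Real.exp (-(tau σ x (x - t • θ))) * A2 k w (x - t • θ) θ‖
        ≤ Real.exp (-(Eint t)) * σ (x - t • θ) * (C * M) := by
    refine Filter.eventually_of_mem (self_mem_ae_restrict measurableSet_uIoc) ?_
    intro t ht
    rw [Set.uIoc_of_le ht₀] at ht
    rw [htau t ht.1, Real.norm_eq_abs, abs_mul, Real.abs_exp, mul_assoc]
    exact mul_le_mul_of_nonneg_left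
      (hA2 (x - t • θ) (hseg t ⟨ht.1.le, ht.2⟩)) (Real.exp_nonneg _)
  have hmain := intervalIntegral.norm_integral_le_abs_of_norm_le hbound hInt
  have hval : (∫ t in (0:ℝ)..t₀, Real.exp (-(Eint t)) * σ (x - t • θ) * (C * M))
      = (1 - Real.exp (-(Eint t₀))) * (C * M) := by
    rw [intervalIntegral.integral_mul_const, hFTC]
  have hE0' : 0 ≤ Eint t₀ :=
    intervalIntegral.integral_nonneg ht₀ fun s _ => hσ0 _
  have he1 : Real.exp (-(Eint t₀)) ≤ 1 := Real.exp_le_one_iff.mpr (by linarith)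
  have hepos : 0 < Real.exp (-(Eint t₀)) := Real.exp_pos _
  have hCM : 0 ≤ C * M := mul_nonneg hC0.le hM
  rw [Kop, Tinv, hL] at *
  calc |∫ t in (0:ℝ)..t₀, Real.exp (-(tau σ x (x - t • θ))) * A2 k w (x - t • θ) θ|
      ≤ |∫ t in (0:ℝ)..t₀, Real.exp (-(Eint t)) * σ (x - t • θ) * (C * M)| := hmain
    _ = |(1 - Real.exp (-(Eint t₀))) * (C * M)| := by rw [hval]
    _ = (1 - Real.exp (-(Eint t₀))) * (C * M) :=
        abs_of_nonneg (mul_nonneg (by linarith) hCM)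
    _ ≤ C * M := by nlinarith

end
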